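/- Let R = ⊕ R_{d,e} be a quotient of S = k[x₀,x₁,y₀,y₁] by a bihomogeneous ideal, and f ∈ R_{i,j}. Then the coefficientwise inequality of bivariate power series holds: (R/(f))(u,v) ≥ [(1 − u^i v^j) · R(u,v)]_+, where R(u,v) = Σ dim_k R_{d,e} u^d v^e is the bigraded Hilbert series and [·]_+ is the bivariate truncation operation. -/

import Mathlib

open MvPolynomial

/-- The bigrading on `S = k[x₀,x₁,y₀,y₁]`: `deg x₀ = deg x₁ = (1,0)`,
`deg y₀ = deg y₁ = (0,1)`. -/
noncomputable def bidegWt : Fin 4 → ℕ × ℕ := ![(1,0), (1,0), (0,1), (0,1)]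

/-- The bigraded Hilbert function of `S/I`. -/
noncomputable def hilb (k : Type*) [Field k] (I : Ideal (MvPolynomial (Fin 4) k))
    (p : ℕ × ℕ) : ℕ :=
  Module.finrank k
    ((weightedHomogeneousSubmodule k bidegWt p).map (Ideal.Quotient.mkₐ k I).toLinearMap)

open scoped Classical in
/-- The bivariate truncation `[·]_+`. -/
noncomputable def trunc (A : ℕ × ℕ → ℤ) : ℕ × ℕ → ℤ :=
  fun p => if ∀ q ≤ p, 0 < A q then A p else 0

/-- Coefficientwise multiplication by `(1 - u^i v^j)` on bivariate series. -/
noncomputable def mulOneSub (i j : ℕ) (A : ℕ × ℕ → ℤ) : ℕ × ℕ → ℤ :=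
  fun p => A p - (if i ≤ p.1 ∧ j ≤ p.2 then A (p.1 - i, p.2 - j) else 0)

section Aux
variable {k : Type*} [Field k]

lemma weight_fst_add_snd (d : Fin 4 →₀ ℕ) :
    (Finsupp.weight bidegWt d).1 + (Finsupp.weight bidegWt d).2 = d.sum fun _ e => e := by
  classical
  rw [Finsupp.weight_apply, Finsupp.sum, Prod.fst_sum, Prod.snd_sum, Finsupp.sum,
    ← Finset.sum_add_distrib]
  refine Finset.sum_congr rfl fun i _ => ?_
  fin_cases i <;> simp [bidegWt, Prod.smul_fst, Prod.smul_snd, smul_eq_mul]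

instance fdV (p : ℕ × ℕ) :
    FiniteDimensional k (weightedHomogeneousSubmodule k bidegWt p : Submodule k (MvPolynomial (Fin 4) k)) := by
  apply Submodule.finiteDimensional_of_le (S₂ := restrictTotalDegree (Fin 4) k (p.1 + p.2))
  intro f hf
  rw [mem_restrictTotalDegree]
  rw [mem_weightedHomogeneousSubmodule] at hf
  apply Finset.sup_le
  intro d hd
  have h := hf (mem_support_iff.mp hd)
  have := weight_fst_add_snd d
  rw [h] at this
  simp [Finsupp.sum] at this ⊢
  omega

lemma ker_mkₐ (J : Ideal (MvPolynomial (Fin 4) k)) :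
    LinearMap.ker (Ideal.Quotient.mkₐ k J).toLinearMap = Submodule.restrictScalars k J := by
  ext x
  rw [LinearMap.mem_ker, Submodule.restrictScalars_mem]
  show Ideal.Quotient.mk J x = 0 ↔ _
  exact Ideal.Quotient.eq_zero_iff_mem

lemma hilb_add_finrank (J : Ideal (MvPolynomial (Fin 4) k)) (p : ℕ × ℕ) :
    hilb k J p
      + Module.finrank k ↥(weightedHomogeneousSubmodule k bidegWt p ⊓ Submodule.restrictScalars k J)
      = Module.finrank k (weightedHomogeneousSubmodule k bidegWt p : Submodule k (MvPolynomial (Fin 4) k)) := by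
  classical
  set V := (weightedHomogeneousSubmodule k bidegWt p : Submodule k (MvPolynomial (Fin 4) k))
  set f := (Ideal.Quotient.mkₐ k J).toLinearMap
  have h1 : (V.map f) = LinearMap.range (f.domRestrict V) := (LinearMap.range_domRestrict V f).symm
  have h2 : LinearMap.ker (f.domRestrict V) = Submodule.comap V.subtype (V ⊓ Submodule.restrictScalars k J) := by
    rw [LinearMap.ker_domRestrict, ker_mkₐ]
    ext x
    simp [x.2]
  have h3 := LinearMap.finrank_range_add_finrank_ker (f.domRestrict V)
  rw [h2] at h3
  have h4 : Module.finrank k ↥(Submodule.comap V.subtype (V ⊓ Submodule.restrictScalars k J))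
      = Module.finrank k ↥(V ⊓ Submodule.restrictScalars k J) :=
    (Submodule.comapSubtypeEquivOfLe inf_le_left).finrank_eq
  rw [h4] at h3
  rw [hilb, h1]
  exact h3

lemma whc_mul {F : MvPolynomial (Fin 4) k} {m : ℕ × ℕ}
    (hF : IsWeightedHomogeneous bidegWt F m) (b : MvPolynomial (Fin 4) k) (p : ℕ × ℕ) :
    weightedHomogeneousComponent bidegWt p (F * b)
      = if m.1 ≤ p.1 ∧ m.2 ≤ p.2 then
          F * weightedHomogeneousComponent bidegWt (p.1 - m.1, p.2 - m.2) b
        else 0 := by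
  classical
  conv_lhs => rw [b.as_sum]
  rw [Finset.mul_sum, map_sum]
  have key : ∀ d : Fin 4 →₀ ℕ, ∀ c : k,
      weightedHomogeneousComponent bidegWt p (F * monomial d c)
        = if m.1 ≤ p.1 ∧ m.2 ≤ p.2 then
            F * weightedHomogeneousComponent bidegWt (p.1 - m.1, p.2 - m.2) (monomial d c)
          else 0 := by
    intro d c
    have hmon : IsWeightedHomogeneous bidegWt (monomial d c) (Finsupp.weight bidegWt d) :=
      isWeightedHomogeneous_monomial _ _ _ rfl
    have hprod : IsWeightedHomogeneous bidegWt (F * monomial d c) (m + Finsupp.weight bidegWt d) :=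
      hF.mul hmon
    rw [weightedHomogeneousComponent_of_mem hmon,
      weightedHomogeneousComponent_of_mem hprod]
    by_cases hle : m.1 ≤ p.1 ∧ m.2 ≤ p.2
    · rw [if_pos hle]
      by_cases he : (p.1 - m.1, p.2 - m.2) = Finsupp.weight bidegWt d
      · rw [if_pos he, if_pos]
        rw [Prod.ext_iff] at he ⊢
        simp only [Prod.fst_add, Prod.snd_add] at *
        omega
      · rw [if_neg he, if_neg, mul_zero]
        rw [Prod.ext_iff] at he ⊢
        simp only [Prod.fst_add, Prod.snd_add] at *
        omega
    · rw [if_neg hle, if_neg]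
      intro he
      rw [Prod.ext_iff] at he
      simp only [Prod.fst_add, Prod.snd_add] at he
      omega
  rw [Finset.sum_congr rfl fun d _ => key d (coeff d b)]
  by_cases hle : m.1 ≤ p.1 ∧ m.2 ≤ p.2
  · simp only [if_pos hle]
    conv_rhs => rw [b.as_sum]
    rw [map_sum, Finset.mul_sum]
  · simp only [if_neg hle, Finset.sum_const_zero]

lemma whc_mem_span {G : Set (MvPolynomial (Fin 4) k)}
    (hG : ∀ g ∈ G, ∃ d : ℕ × ℕ, IsWeightedHomogeneous bidegWt g d)
    {a : MvPolynomial (Fin 4) k} (ha : a ∈ Ideal.span G) (p : ℕ × ℕ) :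
    weightedHomogeneousComponent bidegWt p a ∈ Ideal.span G := by
  classical
  letI : GradedAlgebra (weightedHomogeneousSubmodule k bidegWt) := weightedGradedAlgebra k bidegWt
  have hhom : Ideal.IsHomogeneous (weightedHomogeneousSubmodule k bidegWt) (Ideal.span G) :=
    Ideal.homogeneous_span _ G fun g hg => (hG g hg).imp fun d hd => hd
  have h := hhom p ha
  have heq : (DirectSum.decompose (weightedHomogeneousSubmodule k bidegWt) a p :
      MvPolynomial (Fin 4) k) = weightedHomogeneousComponent bidegWt p a :=
    weightedDecomposition.decompose'_apply k bidegWt a p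
  rwa [heq] at h

lemma key_ineq (I : Ideal (MvPolynomial (Fin 4) k))
    (hI : ∃ G : Set (MvPolynomial (Fin 4) k),
      (∀ g ∈ G, ∃ d : ℕ × ℕ, IsWeightedHomogeneous bidegWt g d) ∧ I = Ideal.span G)
    (i j : ℕ) (F : MvPolynomial (Fin 4) k)
    (hF : IsWeightedHomogeneous bidegWt F (i, j)) (p : ℕ × ℕ) :
    (hilb k (I ⊔ Ideal.span {F}) p : ℤ) ≥
      (hilb k I p : ℤ) - (if i ≤ p.1 ∧ j ≤ p.2 then (hilb k I (p.1 - i, p.2 - j) : ℤ) else 0) := by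
  classical
  obtain ⟨G, hG, hIG⟩ := hI
  set J : Ideal (MvPolynomial (Fin 4) k) := I ⊔ Ideal.span {F} with hJ
  set V : Submodule k (MvPolynomial (Fin 4) k) := weightedHomogeneousSubmodule k bidegWt p with hV
  set V' : Submodule k (MvPolynomial (Fin 4) k) :=
    weightedHomogeneousSubmodule k bidegWt (p.1 - i, p.2 - j) with hV'
  set I' : Submodule k (MvPolynomial (Fin 4) k) := Submodule.restrictScalars k I with hI'
  set J' : Submodule k (MvPolynomial (Fin 4) k) := Submodule.restrictScalars k J with hJ'
  set mulF : MvPolynomial (Fin 4) k →ₗ[k] MvPolynomial (Fin 4) k := LinearMap.mulLeft k F with hmulF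
  set B : Submodule k (MvPolynomial (Fin 4) k) := V'.map mulF with hB
  haveI : FiniteDimensional k V := fdV p
  haveI : FiniteDimensional k V' := fdV _
  haveI : FiniteDimensional k ↥(V ⊓ I') := Submodule.finiteDimensional_of_le inf_le_left
  haveI : FiniteDimensional k ↥(V ⊓ J') := Submodule.finiteDimensional_of_le inf_le_left
  haveI : FiniteDimensional k B := Module.Finite.map V' mulF
  have e1 : hilb k I p + Module.finrank k ↥(V ⊓ I') = Module.finrank k ↥V :=
    hilb_add_finrank I p
  have e2 : hilb k J p + Module.finrank k ↥(V ⊓ J') = Module.finrank k ↥V :=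
    hilb_add_finrank J p
  by_cases hij : i ≤ p.1 ∧ j ≤ p.2
  · rw [if_pos hij]
    have e3 : hilb k I (p.1 - i, p.2 - j) + Module.finrank k ↥(V' ⊓ I')
        = Module.finrank k ↥V' := hilb_add_finrank I (p.1 - i, p.2 - j)
    have hcont : V ⊓ J' ≤ (V ⊓ I') ⊔ B := by
      rintro h ⟨hhV, hhJ⟩
      have hhJ' : h ∈ I ⊔ Ideal.span {F} := hhJ
      obtain ⟨a, ha, c, hc, rfl⟩ := Submodule.mem_sup.mp hhJ'
      obtain ⟨b, rfl⟩ := Ideal.mem_span_singleton'.mp hc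
      have hsame : weightedHomogeneousComponent bidegWt p (a + b * F) = a + b * F :=
        weightedHomogeneousComponent_eq_self hhV
      rw [map_add, mul_comm b F, whc_mul hF b p, if_pos hij] at hsame
      rw [mul_comm b F, ← hsame]
      refine Submodule.mem_sup.mpr ⟨weightedHomogeneousComponent bidegWt p a,
        ⟨weightedHomogeneousComponent_mem bidegWt a p, ?_⟩,
        F * weightedHomogeneousComponent bidegWt (p.1 - i, p.2 - j) b,
        Submodule.mem_map_of_mem (weightedHomogeneousComponent_mem bidegWt b _), rfl⟩
      show weightedHomogeneousComponent bidegWt p a ∈ I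
      rw [hIG] at ha ⊢
      exact whc_mem_span hG ha p
    by_cases hF0 : F = 0
    · have hJI : J = I := by rw [hJ, hF0, Ideal.span_singleton_eq_bot.mpr rfl, sup_bot_eq]
      rw [hJI]
      omega
    · have hinj : Function.Injective mulF := fun x y hxy => mul_left_cancel₀ hF0 hxy
      have hC : (V' ⊓ I' : Submodule k (MvPolynomial (Fin 4) k)).map mulF ≤ (V ⊓ I') ⊓ B := by
        rintro z ⟨g, ⟨hgV', hgI⟩, rfl⟩
        refine ⟨⟨?_, ?_⟩, Submodule.mem_map_of_mem hgV'⟩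
        · show F * g ∈ V
          have hh := hF.mul (hgV' : IsWeightedHomogeneous bidegWt g (p.1 - i, p.2 - j))
          have hdeg : ((i, j) + (p.1 - i, p.2 - j) : ℕ × ℕ) = p := by
            rw [Prod.ext_iff]; simp; omega
          rwa [hdeg] at hh
        · show F * g ∈ I
          exact Ideal.mul_mem_left I F hgI
      haveI : FiniteDimensional k ↥(V' ⊓ I') := Submodule.finiteDimensional_of_le inf_le_left
      haveI : FiniteDimensional k ↥((V' ⊓ I' : Submodule k (MvPolynomial (Fin 4) k)).map mulF) :=
        Module.Finite.map _ mulF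
      haveI : FiniteDimensional k ↥((V ⊓ I') ⊔ B) := Submodule.finiteDimensional_sup _ _
      have h4 : Module.finrank k ↥(V ⊓ J') ≤ Module.finrank k ↥((V ⊓ I') ⊔ B) :=
        Submodule.finrank_mono hcont
      have h5 : Module.finrank k ↥((V ⊓ I') ⊔ B) + Module.finrank k ↥((V ⊓ I') ⊓ B)
          = Module.finrank k ↥(V ⊓ I') + Module.finrank k B :=
        Submodule.finrank_sup_add_finrank_inf_eq (V ⊓ I') B
      have h6 : Module.finrank k B = Module.finrank k V' :=
        (Submodule.equivMapOfInjective mulF hinj V').finrank_eq.symm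
      have h7 : Module.finrank k ↥(V' ⊓ I') ≤ Module.finrank k ↥((V ⊓ I') ⊓ B) := by
        haveI : FiniteDimensional k ↥((V ⊓ I') ⊓ B) :=
          Submodule.finiteDimensional_of_le inf_le_left
        calc Module.finrank k ↥(V' ⊓ I')
            = Module.finrank k ↥((V' ⊓ I' : Submodule k (MvPolynomial (Fin 4) k)).map mulF) :=
              (Submodule.equivMapOfInjective mulF hinj _).finrank_eq
          _ ≤ _ := Submodule.finrank_mono hC
      omega
  · rw [if_neg hij]
    have hcont : V ⊓ J' ≤ V ⊓ I' := by
      rintro h ⟨hhV, hhJ⟩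
      have hhJ' : h ∈ I ⊔ Ideal.span {F} := hhJ
      obtain ⟨a, ha, c, hc, rfl⟩ := Submodule.mem_sup.mp hhJ'
      obtain ⟨b, rfl⟩ := Ideal.mem_span_singleton'.mp hc
      have hsame : weightedHomogeneousComponent bidegWt p (a + b * F) = a + b * F :=
        weightedHomogeneousComponent_eq_self hhV
      rw [map_add, mul_comm b F, whc_mul hF b p, if_neg hij, add_zero] at hsame
      rw [mul_comm b F, ← hsame]
      refine ⟨weightedHomogeneousComponent_mem bidegWt a p, ?_⟩
      show weightedHomogeneousComponent bidegWt p a ∈ I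
      rw [hIG] at ha ⊢
      exact whc_mem_span hG ha p
    have h4 : Module.finrank k ↥(V ⊓ J') ≤ Module.finrank k ↥(V ⊓ I') :=
      Submodule.finrank_mono hcont
    omega

end Aux

/-- For a bigraded quotient `R = S/I` of `S = k[x₀,x₁,y₀,y₁]` by a bihomogeneous
ideal and `f ∈ R_{i,j}` (represented by a bihomogeneous `F` of bidegree `(i,j)`),
the Hilbert series of `R/(f)` dominates `[(1 − u^i v^j)·R(u,v)]_+` coefficientwise. -/
theorem hilb_quotient_ge_trunc (k : Type*) [Field k]
    (I : Ideal (MvPolynomial (Fin 4) k))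
    (hI : ∃ G : Set (MvPolynomial (Fin 4) k),
      (∀ g ∈ G, ∃ d : ℕ × ℕ, IsWeightedHomogeneous bidegWt g d) ∧ I = Ideal.span G)
    (i j : ℕ) (F : MvPolynomial (Fin 4) k)
    (hF : IsWeightedHomogeneous bidegWt F (i, j)) :
    ∀ p : ℕ × ℕ,
      (hilb k (I ⊔ Ideal.span {F}) p : ℤ) ≥
        trunc (mulOneSub i j (fun q => (hilb k I q : ℤ))) p := by
  intro p
  rw [trunc]
  split_ifs with h
  · show _ ≥ mulOneSub i j (fun q => (hilb k I q : ℤ)) p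
    simp only [mulOneSub]
    exact key_ineq I hI i j F hF p
  · exact Int.natCast_nonneg _
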